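/- Let G be an r-regular bipartite graph on 2n vertices with r ≥ 2, and let a_4(G) denote the number of 4-cycles in G. Then a_4(G) ≤ nr(r−1)^2/4, with equality if and only if n = qr for some integer q and G is the disjoint union of q copies of K_{r,r}. -/

import Mathlib

/-- Eight times the number of (unlabeled) 4-cycles in `G`: the number of ordered
quadruples of distinct vertices `(a,b,c,d)` with `a~b`, `b~c`, `c~d`, `d~a`. -/
noncomputable def cycles4Ordered {V : Type*} [Fintype V] (G : SimpleGraph V) : ℕ := by
  classical
  exact ((Finset.univ : Finset (V × V × V × V)).filter
    (fun p => p.1 ≠ p.2.1 ∧ p.1 ≠ p.2.2.1 ∧ p.1 ≠ p.2.2.2 ∧ p.2.1 ≠ p.2.2.1 ∧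
      p.2.1 ≠ p.2.2.2 ∧ p.2.2.1 ≠ p.2.2.2 ∧
      G.Adj p.1 p.2.1 ∧ G.Adj p.2.1 p.2.2.1 ∧ G.Adj p.2.2.1 p.2.2.2 ∧
      G.Adj p.2.2.2 p.1)).card

/-- The number of 4-cycles in `G` (each unlabeled 4-cycle corresponds to exactly
8 ordered quadruples). -/
noncomputable def a4 {V : Type*} [Fintype V] (G : SimpleGraph V) : ℚ :=
  (cycles4Ordered G : ℚ) / 8

/-- The disjoint union of `q` copies of the complete bipartite graph `K_{r,r}`. -/
def qKrr (q r : ℕ) : SimpleGraph (Fin q × (Fin r ⊕ Fin r)) where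
  Adj u v := u.1 = v.1 ∧ (completeBipartiteGraph (Fin r) (Fin r)).Adj u.2 v.2
  symm := by
    constructor
    rintro ⟨a, x⟩ ⟨b, y⟩ ⟨h1, h2⟩
    exact ⟨h1.symm, h2.symm⟩
  loopless := by
    constructor
    rintro ⟨a, x⟩ ⟨-, h⟩
    exact (completeBipartiteGraph (Fin r) (Fin r)).irrefl h

section FourCyclesAux

open Finset

instance (q r : ℕ) : DecidableRel (qKrr q r).Adj := fun u v =>
  inferInstanceAs (Decidable (u.1 = v.1 ∧ ((u.2.isLeft ∧ v.2.isRight) ∨ (u.2.isRight ∧ v.2.isLeft))))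

variable {V : Type*} [Fintype V] {W : Type*} [Fintype W]

def codeg [DecidableEq V] (G : SimpleGraph V) [DecidableRel G.Adj] (a c : V) : ℕ :=
  (G.neighborFinset a ∩ G.neighborFinset c).card

lemma nat_mul_self_sub (m : ℕ) : m * m - m = m * (m - 1) := by
  cases m with
  | zero => rfl
  | succ k => rw [Nat.succ_sub_one, Nat.mul_succ, Nat.add_sub_cancel]

lemma cycles4_eq_sum [DecidableEq V] (G : SimpleGraph V) [DecidableRel G.Adj] :
    cycles4Ordered G =
      ∑ p ∈ (univ : Finset V).offDiag, codeg G p.1 p.2 * (codeg G p.1 p.2 - 1) := by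
  classical
  unfold cycles4Ordered
  rw [Finset.card_eq_sum_card_fiberwise
    (f := fun p : V × V × V × V => (p.1, p.2.2.1)) (t := (univ : Finset V).offDiag)
    (by
      intro p hp
      simp only [Finset.mem_coe, Finset.mem_filter] at hp
      simp [Finset.mem_offDiag, hp.2.2.1])]
  refine Finset.sum_congr rfl ?_
  rintro ⟨a, c⟩ hac
  simp only [Finset.mem_offDiag] at hac
  simp only [codeg]
  rw [← nat_mul_self_sub, ← Finset.offDiag_card]
  show _ = ((G.neighborFinset a ∩ G.neighborFinset c).offDiag).card
  apply Finset.card_nbij' (i := fun p => (p.2.1, p.2.2.2))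
    (j := fun p => (a, p.1, c, p.2))
  · intro x hp
    obtain ⟨a', b, c', d⟩ := x
    simp only [Finset.mem_coe, Finset.mem_filter, Finset.mem_filter, Prod.mk.injEq] at hp
    obtain ⟨⟨-, h1, h2, h3, h4, h5, h6, h7, h8, h9, h10⟩, ha, hc⟩ := hp
    subst ha; subst hc
    simp only [Finset.mem_coe, Finset.mem_offDiag, Finset.mem_inter, SimpleGraph.mem_neighborFinset]
    exact ⟨⟨h7, h8.symm⟩, ⟨h10.symm, h9⟩, h5⟩
  · intro x hp
    obtain ⟨b, d⟩ := x
    simp only [Finset.mem_coe, Finset.mem_offDiag, Finset.mem_inter, SimpleGraph.mem_neighborFinset] at hp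
    obtain ⟨⟨hab, hcb⟩, ⟨had, hcd⟩, hbd⟩ := hp
    simp only [Finset.mem_coe, Finset.mem_filter, Finset.mem_univ, true_and, Prod.mk.injEq]
    exact ⟨⟨hab.ne, hac.2.2, had.ne, hcb.ne', hbd, hcd.ne, hab, hcb.symm, hcd, had.symm⟩,
      trivial⟩
  · intro x hp
    obtain ⟨a', b, c', d⟩ := x
    simp only [Finset.mem_coe, Finset.mem_filter, Prod.mk.injEq] at hp
    obtain ⟨-, ha, hc⟩ := hp
    subst ha; subst hc
    rfl
  · rintro ⟨b, d⟩ _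
    rfl

lemma codeg_le [DecidableEq V] (G : SimpleGraph V) [DecidableRel G.Adj] {r : ℕ}
    (hreg : ∀ v : V, G.degree v = r) (a c : V) : codeg G a c ≤ r := by
  rw [← hreg a, ← SimpleGraph.card_neighborFinset_eq_degree]
  exact Finset.card_le_card inter_subset_left

lemma sum_codeg [DecidableEq V] (G : SimpleGraph V) [DecidableRel G.Adj] {n r : ℕ}
    (hcard : Fintype.card V = 2 * n) (hreg : ∀ v : V, G.degree v = r) :
    ∑ p ∈ (univ : Finset V).offDiag, codeg G p.1 p.2 = 2 * n * (r * (r - 1)) := by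
  have h1 : ∀ p : V × V, codeg G p.1 p.2 =
      ∑ b : V, if G.Adj p.1 b ∧ G.Adj p.2 b then 1 else 0 := by
    intro p
    rw [codeg, show G.neighborFinset p.1 ∩ G.neighborFinset p.2
        = univ.filter (fun b => G.Adj p.1 b ∧ G.Adj p.2 b) by
      ext b; simp [SimpleGraph.mem_neighborFinset], Finset.card_filter]
  calc ∑ p ∈ (univ : Finset V).offDiag, codeg G p.1 p.2
      = ∑ p ∈ (univ : Finset V).offDiag, ∑ b : V,
          if G.Adj p.1 b ∧ G.Adj p.2 b then 1 else 0 := by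
        exact Finset.sum_congr rfl fun p _ => h1 p
    _ = ∑ b : V, ∑ p ∈ (univ : Finset V).offDiag,
          if G.Adj p.1 b ∧ G.Adj p.2 b then 1 else 0 := Finset.sum_comm
    _ = ∑ b : V, ((G.neighborFinset b).offDiag).card := by
        refine Finset.sum_congr rfl fun b _ => ?_
        rw [Finset.card_eq_sum_ones, ← Finset.sum_filter]
        congr 1
        ext p
        simp only [Finset.mem_filter, Finset.mem_offDiag, Finset.mem_univ,
          SimpleGraph.mem_neighborFinset, true_and]
        constructor
        · rintro ⟨hne, h1, h2⟩
          exact ⟨h1.symm, h2.symm, hne⟩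
        · rintro ⟨h1, h2, hne⟩
          exact ⟨hne, h1.symm, h2.symm⟩
    _ = ∑ _b : V, r * (r - 1) := by
        refine Finset.sum_congr rfl fun b _ => ?_
        rw [Finset.offDiag_card, SimpleGraph.card_neighborFinset_eq_degree, hreg b,
          nat_mul_self_sub]
    _ = 2 * n * (r * (r - 1)) := by
        rw [Finset.sum_const, Finset.card_univ, hcard, smul_eq_mul]

lemma codeg_map [DecidableEq V] [DecidableEq W] (G : SimpleGraph V) (H : SimpleGraph W)
    [DecidableRel G.Adj] [DecidableRel H.Adj] (e : G ≃g H) (a c : V) :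
    codeg G a c = codeg H (e a) (e c) := by
  have hmap : ∀ v : V, (G.neighborFinset v).map e.toEquiv.toEmbedding
      = H.neighborFinset (e v) := by
    intro v
    ext b
    simp only [Finset.mem_map, SimpleGraph.mem_neighborFinset, Equiv.coe_toEmbedding]
    constructor
    · rintro ⟨x, hx, rfl⟩
      exact e.map_adj_iff.2 hx
    · intro h
      refine ⟨e.symm b, ?_, by simp⟩
      have h2 : G.Adj (e.symm (e v)) (e.symm b) := e.symm.map_adj_iff.mpr h
      simpa using h2
  rw [codeg, codeg, ← hmap a, ← hmap c, ← Finset.map_inter, Finset.card_map]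

lemma qKrr_adj (q r : ℕ) (u v : Fin q × (Fin r ⊕ Fin r)) :
    (qKrr q r).Adj u v ↔ u.1 = v.1 ∧
      ((u.2.isLeft ∧ v.2.isRight) ∨ (u.2.isRight ∧ v.2.isLeft)) := Iff.rfl

lemma codeg_qKrr (q r : ℕ) (u v : Fin q × (Fin r ⊕ Fin r)) :
    codeg (qKrr q r) u v = 0 ∨ codeg (qKrr q r) u v = r := by
  classical
  obtain ⟨i, x⟩ := u
  obtain ⟨j, y⟩ := v
  by_cases hij : i = j
  · subst hij
    by_cases hside : x.isLeft = y.isLeft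
    · right
      have himg : (qKrr q r).neighborFinset (i, x) ∩ (qKrr q r).neighborFinset (i, y)
          = (univ : Finset (Fin r)).image
            (fun c => (i, if x.isLeft then Sum.inr c else Sum.inl c)) := by
        ext ⟨k, z⟩
        simp only [Finset.mem_inter, SimpleGraph.mem_neighborFinset, Finset.mem_image,
          Finset.mem_univ, true_and, qKrr_adj]
        constructor
        · rintro ⟨⟨h1, h2⟩, ⟨h3, h4⟩⟩
          rcases x with a | a <;> rcases y with b | b <;> rcases z with c | c <;>
            simp_all
        · rintro ⟨c, hc⟩
          injection hc with hk hz
          subst hk; subst hz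
          rcases x with a | a <;> rcases y with b | b <;> simp_all
      rw [codeg, himg, Finset.card_image_of_injective _
        (fun a b h => by
          rcases x with c | c <;> simp_all), Finset.card_univ, Fintype.card_fin]
    · left
      rw [codeg, Finset.card_eq_zero, Finset.eq_empty_iff_forall_notMem]
      rintro ⟨k, z⟩ hz
      simp only [Finset.mem_inter, SimpleGraph.mem_neighborFinset, qKrr_adj] at hz
      obtain ⟨⟨-, h2⟩, ⟨-, h4⟩⟩ := hz
      rcases x with a | a <;> rcases y with b | b <;> rcases z with c | c <;> simp_all
  · left
    rw [codeg, Finset.card_eq_zero, Finset.eq_empty_iff_forall_notMem]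
    rintro ⟨k, z⟩ hz
    simp only [Finset.mem_inter, SimpleGraph.mem_neighborFinset, qKrr_adj] at hz
    obtain ⟨⟨h1, -⟩, ⟨h2, -⟩⟩ := hz
    exact hij (h1.trans h2.symm)

lemma sum_cross_iff {α β γ δ : Type*} (s : α ⊕ β) (t : γ ⊕ δ) :
    ((s.isLeft ∧ t.isRight) ∨ (s.isRight ∧ t.isLeft)) ↔ s.isLeft ≠ t.isLeft := by
  rcases s with a | a <;> rcases t with b | b <;> simp

lemma struct [DecidableEq V] (G : SimpleGraph V) [DecidableRel G.Adj] {n r : ℕ} (hr : 2 ≤ r)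
    (hcard : Fintype.card V = 2 * n) (hreg : ∀ v : V, G.degree v = r)
    (hcod : ∀ a c : V, a ≠ c → codeg G a c = 0 ∨ codeg G a c = r) :
    ∃ q : ℕ, n = q * r ∧ Nonempty (G ≃g qKrr q r) := by
  classical
  set N : V → Finset V := fun v => G.neighborFinset v with hN
  have memN : ∀ v x : V, x ∈ N v ↔ G.Adj v x := by
    intro v x; rw [hN]; exact SimpleGraph.mem_neighborFinset G v x
  have cardN : ∀ v, (N v).card = r := fun v =>
    (SimpleGraph.card_neighborFinset_eq_degree G v).trans (hreg v)
  have nonemptyN : ∀ v, (N v).Nonempty := fun v =>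
    Finset.card_pos.1 (by rw [cardN]; omega)
  -- Claim 1
  have key1 : ∀ a b b' : V, G.Adj a b → G.Adj a b' → N b = N b' := by
    intro a b b' h h'
    by_cases hbb : b = b'
    · rw [hbb]
    · have h1 : a ∈ N b ∩ N b' := by
        rw [Finset.mem_inter, memN, memN]; exact ⟨h.symm, h'.symm⟩
      have h2 : codeg G b b' = r := by
        rcases hcod b b' hbb with h0 | h0
        · exfalso
          rw [codeg, Finset.card_eq_zero] at h0
          rw [h0] at h1
          exact Finset.notMem_empty a h1
        · exact h0
      have e1 : N b ∩ N b' = N b :=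
        Finset.eq_of_subset_of_card_le Finset.inter_subset_left
          (by rw [cardN]; exact h2.symm.le)
      have e2 : N b ∩ N b' = N b' :=
        Finset.eq_of_subset_of_card_le Finset.inter_subset_right
          (by rw [cardN]; exact h2.symm.le)
      rw [← e1, e2]
  set B : V → Finset V := fun v => univ.filter (fun x => N x = N v) with hB
  have memB : ∀ v x : V, x ∈ B v ↔ N x = N v := by
    intro v x; rw [hB]; simp
  -- Claim 2 : for an edge a ~ b, B b = N a
  have key2 : ∀ a b : V, G.Adj a b → B b = N a := by
    intro a b hab
    ext x
    rw [memB, memN]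
    constructor
    · intro hx
      have : a ∈ N x := by rw [hx, memN]; exact hab.symm
      exact ((memN x a).1 this).symm
    · intro hx
      exact key1 a x b hx hab
  have cardB : ∀ v, (B v).card = r := by
    intro v
    obtain ⟨b, hb⟩ := nonemptyN v
    rw [key2 b v (((memN v b).1 hb).symm), cardN]
  have self_mem_B : ∀ v, v ∈ B v := fun v => (memB v v).2 rfl
  have disjBN : ∀ v, Disjoint (B v) (N v) := by
    intro v
    rw [Finset.disjoint_left]
    intro x hxB hxN
    rw [memB] at hxB
    rw [memN] at hxN
    have : x ∈ N x := by rw [hxB, memN]; exact hxN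
    rw [memN] at this
    exact G.loopless.irrefl x this
  have B_ne_N : ∀ v, B v ≠ N v := by
    intro v h
    have := self_mem_B v
    rw [h, memN] at this
    exact G.loopless.irrefl v this
  set C : V → Finset V := fun v => B v ∪ N v with hC
  have memC : ∀ v x : V, x ∈ C v ↔ x ∈ B v ∨ x ∈ N v := by
    intro v x; rw [hC]; simp
  have cardC : ∀ v, (C v).card = 2 * r := by
    intro v
    rw [hC]
    simp only
    rw [Finset.card_union_of_disjoint (disjBN v), cardB, cardN]
    omega
  have mem_C_self : ∀ v, v ∈ C v := fun v => (memC v v).2 (Or.inl (self_mem_B v))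
  have B_congr : ∀ u v : V, N u = N v → B u = B v := by
    intro u v h
    ext x
    rw [memB, memB, h]
  have C_eq : ∀ v w : V, w ∈ C v → C w = C v := by
    intro v w hw
    rcases (memC v w).1 hw with h | h
    · rw [memB] at h
      rw [hC]
      simp only
      rw [B_congr w v h, h]
    · rw [memN] at h
      have h1 : B w = N v := key2 v w h
      have h2 : N w = B v := (key2 w v h.symm).symm
      rw [hC]
      simp only
      rw [h1, h2, Finset.union_comm]
  have adj_iff : ∀ u w : V, G.Adj u w ↔ C u = C w ∧ N u ≠ N w := by
    intro u w
    constructor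
    · intro h
      refine ⟨(C_eq u w ((memC u w).2 (Or.inr ((memN u w).2 h)))).symm, ?_⟩
      intro hNE
      have : w ∈ N w := by rw [← hNE, memN]; exact h
      rw [memN] at this
      exact G.loopless.irrefl w this
    · rintro ⟨hCC, hNE⟩
      have hu : u ∈ C w := hCC ▸ mem_C_self u
      rcases (memC w u).1 hu with h | h
      · exact absurd ((memB w u).1 h) hNE
      · exact ((memN w u).1 h).symm
  -- the blocks
  set T : Finset (Finset V) := univ.image C with hT
  set q : ℕ := T.card with hq
  have memT : ∀ v : V, C v ∈ T := fun v => Finset.mem_image_of_mem C (Finset.mem_univ v)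
  have fiberC : ∀ v : V, univ.filter (fun w => C w = C v) = C v := by
    intro v
    ext w
    simp only [Finset.mem_filter, Finset.mem_univ, true_and]
    constructor
    · intro h; rw [← h]; exact mem_C_self w
    · intro h; exact C_eq v w h
  have hn2 : 2 * n = q * (2 * r) := by
    have h0 := Finset.card_eq_sum_card_fiberwise
      (f := C) (s := (univ : Finset V)) (t := T) (fun x _ => memT x)
    rw [Finset.card_univ, hcard] at h0
    rw [h0]
    rw [Finset.sum_congr rfl (fun t ht => ?_), Finset.sum_const, smul_eq_mul]
    obtain ⟨v, -, rfl⟩ := Finset.mem_image.1 ht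
    rw [fiberC v, cardC v]
  have hn : n = q * r := by
    have : 2 * n = 2 * (q * r) := by rw [hn2]; ring
    omega
  refine ⟨q, hn, ?_⟩
  -- representatives
  have hrep0 : ∀ t : {t // t ∈ T}, ∃ v : V, C v = (t : Finset V) := by
    intro t
    obtain ⟨v, -, hv⟩ := Finset.mem_image.1 t.2
    exact ⟨v, hv⟩
  choose rep hrep using hrep0
  set Rep : V → V := fun v => rep ⟨C v, memT v⟩ with hRepDef
  have Rep_congr : ∀ u v : V, C u = C v → Rep u = Rep v := by
    intro u v h
    exact congrArg rep (Subtype.ext h)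
  have RepC : ∀ v, C (Rep v) = C v := fun v => hrep ⟨C v, memT v⟩
  have rpos : 0 < r := by omega
  set enc : V → V → (Fin r ⊕ Fin r) := fun p v =>
    if h : v ∈ B p then Sum.inl (Finset.equivFinOfCardEq (cardB p) ⟨v, h⟩)
    else if h' : v ∈ N p then Sum.inr (Finset.equivFinOfCardEq (cardN p) ⟨v, h'⟩)
    else Sum.inl ⟨0, rpos⟩ with henc
  have eT : {t // t ∈ T} ≃ Fin q := T.equivFin
  set f : V → Fin q × (Fin r ⊕ Fin r) :=
    fun v => (eT ⟨C v, memT v⟩, enc (Rep v) v) with hf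
  -- membership of v in its own block's parts
  have memCP : ∀ v, v ∈ C (Rep v) := fun v => (RepC v).symm ▸ mem_C_self v
  -- side characterization
  have encLeft : ∀ p v : V, v ∈ C p → ((enc p v).isLeft ↔ N v = N p) := by
    intro p v hv
    rw [henc]
    simp only
    rcases (memC p v).1 hv with h | h
    · rw [dif_pos h]
      simp [(memB p v).1 h]
    · have hnB : v ∉ B p := fun hB' => Finset.disjoint_left.1 (disjBN p) hB' h
      rw [dif_neg hnB, dif_pos h]
      simp only [Sum.isLeft_inr, Bool.false_eq_true, false_iff]
      intro hNN
      have h2 : N v = B p := (key2 v p (((memN p v).1 h).symm)).symm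
      exact B_ne_N p (h2 ▸ hNN ▸ rfl)
  have NeqB : ∀ p v : V, v ∈ C p → N v ≠ N p → N v = B p := by
    intro p v hv hne
    rcases (memC p v).1 hv with h | h
    · exact absurd ((memB p v).1 h) hne
    · exact (key2 v p (((memN p v).1 h).symm)).symm
  -- injectivity
  have finj : Function.Injective f := by
    intro u w h
    rw [hf] at h
    simp only [Prod.mk.injEq] at h
    obtain ⟨h1, h2⟩ := h
    have hC1 : C u = C w := congrArg Subtype.val (eT.injective h1)
    have hR : Rep u = Rep w := Rep_congr u w hC1
    rw [hR] at h2
    set p := Rep w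
    have hu : u ∈ C p := hR ▸ memCP u
    have hw : w ∈ C p := memCP w
    rw [henc] at h2
    simp only at h2
    by_cases hub : u ∈ B p <;> by_cases hwb : w ∈ B p
    · rw [dif_pos hub, dif_pos hwb] at h2
      have := (Finset.equivFinOfCardEq (cardB p)).injective (Sum.inl.inj h2)
      exact congrArg Subtype.val this
    · exfalso
      have hwn : w ∈ N p := ((memC p w).1 hw).resolve_left hwb
      rw [dif_pos hub, dif_neg hwb, dif_pos hwn] at h2
      exact Sum.inl_ne_inr h2
    · exfalso
      have hun : u ∈ N p := ((memC p u).1 hu).resolve_left hub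
      rw [dif_neg hub, dif_pos hun, dif_pos hwb] at h2
      exact Sum.inr_ne_inl h2
    · have hun : u ∈ N p := ((memC p u).1 hu).resolve_left hub
      have hwn : w ∈ N p := ((memC p w).1 hw).resolve_left hwb
      rw [dif_neg hub, dif_pos hun, dif_neg hwb, dif_pos hwn] at h2
      have := (Finset.equivFinOfCardEq (cardN p)).injective (Sum.inr.inj h2)
      exact congrArg Subtype.val this
  have hbij : Function.Bijective f := by
    rw [Fintype.bijective_iff_injective_and_card]
    refine ⟨finj, ?_⟩
    rw [hcard, hn]
    simp only [Fintype.card_prod, Fintype.card_fin, Fintype.card_sum]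
    ring
  refine ⟨⟨Equiv.ofBijective f hbij, ?_⟩⟩
  intro u w
  show (qKrr q r).Adj (f u) (f w) ↔ G.Adj u w
  rw [qKrr_adj, adj_iff]
  rw [hf]
  simp only
  have h1iff : eT ⟨C u, memT u⟩ = eT ⟨C w, memT w⟩ ↔ C u = C w := by
    rw [Equiv.apply_eq_iff_eq, Subtype.mk.injEq]
  rw [h1iff]
  constructor
  · rintro ⟨hCC, hcross⟩
    refine ⟨hCC, ?_⟩
    have hR : Rep u = Rep w := Rep_congr u w hCC
    rw [hR] at hcross
    have hu : u ∈ C (Rep w) := hR ▸ memCP u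
    have hw : w ∈ C (Rep w) := memCP w
    rw [sum_cross_iff] at hcross
    intro hNN
    apply hcross
    by_cases h : N u = N (Rep w)
    · rw [(encLeft (Rep w) u hu).2 h, (encLeft (Rep w) w hw).2 (hNN ▸ h)]
    · have h1 : (enc (Rep w) u).isLeft = false := by
        rw [← Bool.not_eq_true]
        exact fun ht => h ((encLeft (Rep w) u hu).1 ht)
      have h2 : (enc (Rep w) w).isLeft = false := by
        rw [← Bool.not_eq_true]
        exact fun ht => (hNN ▸ h) ((encLeft (Rep w) w hw).1 ht)
      rw [h1, h2]
  · rintro ⟨hCC, hNN⟩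
    refine ⟨hCC, ?_⟩
    have hR : Rep u = Rep w := Rep_congr u w hCC
    rw [hR]
    have hu : u ∈ C (Rep w) := hR ▸ memCP u
    have hw : w ∈ C (Rep w) := memCP w
    rw [sum_cross_iff]
    intro hsame
    apply hNN
    by_cases h : N u = N (Rep w)
    · have h2 : (enc (Rep w) w).isLeft = true := by
        rw [← hsame, (encLeft (Rep w) u hu).2 h]
      rw [h, (encLeft (Rep w) w hw).1 h2]
    · have h2 : N w ≠ N (Rep w) := by
        intro hw2
        exact h ((encLeft (Rep w) u hu).1
          (by rw [hsame, (encLeft (Rep w) w hw).2 hw2]))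
      rw [NeqB (Rep w) u hu h, NeqB (Rep w) w hw h2]

end FourCyclesAux

/-- Let `G` be an `r`-regular bipartite graph on `2n` vertices, `r ≥ 2`, and let
`a₄(G)` be the number of 4-cycles in `G`.  Then `a₄(G) ≤ nr(r−1)²/4`, with equality
if and only if `n = qr` for some integer `q` and `G` is the disjoint union of `q`
copies of `K_{r,r}`. -/
theorem four_cycles_bound {V : Type*} [Fintype V]
    (G : SimpleGraph V) [DecidableRel G.Adj] (n r : ℕ) (hr : 2 ≤ r)
    (hcard : Fintype.card V = 2 * n) (hbip : G.Colorable 2)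
    (hreg : ∀ v : V, G.degree v = r) :
    a4 G ≤ (n * r * ((r : ℚ) - 1) ^ 2) / 4 ∧
    (a4 G = (n * r * ((r : ℚ) - 1) ^ 2) / 4 ↔
      ∃ q : ℕ, n = q * r ∧ Nonempty (G ≃g qKrr q r)) := by
  classical
  have hsum := cycles4_eq_sum G
  have hsc := sum_codeg G hcard hreg
  have hterm : ∀ p ∈ (Finset.univ : Finset V).offDiag,
      codeg G p.1 p.2 * (codeg G p.1 p.2 - 1) ≤ codeg G p.1 p.2 * (r - 1) :=
    fun p _ => Nat.mul_le_mul_left _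
      (Nat.sub_le_sub_right (codeg_le G hreg p.1 p.2) 1)
  have hrb : 2 * n * (r * (r - 1)) * (r - 1)
      = ∑ p ∈ (Finset.univ : Finset V).offDiag, codeg G p.1 p.2 * (r - 1) := by
    rw [← Finset.sum_mul, hsc]
  have hle : cycles4Ordered G ≤ 2 * n * (r * (r - 1)) * (r - 1) := by
    rw [hsum, hrb]
    exact Finset.sum_le_sum hterm
  have hiff : cycles4Ordered G = 2 * n * (r * (r - 1)) * (r - 1) ↔
      (∀ a c : V, a ≠ c → codeg G a c = 0 ∨ codeg G a c = r) := by
    rw [hsum, hrb, Finset.sum_eq_sum_iff_of_le hterm]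
    constructor
    · intro h a c hac
      have h2 := h (a, c) (by simp [Finset.mem_offDiag, hac])
      simp only at h2
      have hm : codeg G a c ≤ r := codeg_le G hreg a c
      rcases Nat.eq_zero_or_pos (codeg G a c) with h0 | h0
      · exact Or.inl h0
      · right
        have h3 := Nat.eq_of_mul_eq_mul_left h0 h2
        omega
    · intro h p hp
      have hne : p.1 ≠ p.2 := (Finset.mem_offDiag.1 hp).2.2
      rcases h p.1 p.2 hne with h0 | h0 <;> rw [h0] <;> simp
  have hcast : ((2 * n * (r * (r - 1)) * (r - 1) : ℕ) : ℚ) / 8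
      = (n * r * ((r : ℚ) - 1) ^ 2) / 4 := by
    have h1 : (1 : ℕ) ≤ r := by omega
    push_cast [h1]
    ring
  constructor
  · show (cycles4Ordered G : ℚ) / 8 ≤ _
    rw [← hcast]
    have h2 : (cycles4Ordered G : ℚ) ≤ ((2 * n * (r * (r - 1)) * (r - 1) : ℕ) : ℚ) :=
      Nat.cast_le.2 hle
    gcongr
  · constructor
    · intro heq
      have h3 : (cycles4Ordered G : ℚ) / 8
          = ((2 * n * (r * (r - 1)) * (r - 1) : ℕ) : ℚ) / 8 := by
        rw [hcast]; exact heq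
      have h4 : (cycles4Ordered G : ℚ) = ((2 * n * (r * (r - 1)) * (r - 1) : ℕ) : ℚ) := by
        linarith
      have h5 : cycles4Ordered G = 2 * n * (r * (r - 1)) * (r - 1) := Nat.cast_injective h4
      exact struct G hr hcard hreg (hiff.1 h5)
    · rintro ⟨q, hnq, ⟨e⟩⟩
      have cond : ∀ a c : V, a ≠ c → codeg G a c = 0 ∨ codeg G a c = r := by
        intro a c hac
        rw [codeg_map G (qKrr q r) e a c]
        exact codeg_qKrr q r (e a) (e c)
      have h5 := hiff.2 cond
      show (cycles4Ordered G : ℚ) / 8 = _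
      rw [h5, hcast]
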